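/- Let L be a lattice and a, b ∈ L with a ≤ b. Assume the interval [a,b] is finite and the mapping x ↦ (x^{ab})^{ab} from [a,b] to subsets of [a,b] is injective. Then for every c ∈ [a,b] there exists some d ∈ (c^{ab})^{ab} with (d^{ab})^{ab} = {d}. -/

import Mathlib

/-- `A^{ab}`: the set of common relative complements in `[a,b]` of all elements of `A`. -/
def relCompl {L : Type*} [Lattice L] (a b : L) (A : Set L) : Set L :=
  {y ∈ Set.Icc a b | ∀ x ∈ A, x ⊔ y = b ∧ x ⊓ y = a}

lemma relCompl_antitone {L : Type*} [Lattice L] (a b : L) {A B : Set L} (h : A ⊆ B) :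
    relCompl a b B ⊆ relCompl a b A := by
  rintro y ⟨hy, hy2⟩
  exact ⟨hy, fun x hx => hy2 x (h hx)⟩

lemma relCompl_subset_Icc {L : Type*} [Lattice L] (a b : L) (A : Set L) :
    relCompl a b A ⊆ Set.Icc a b := fun y hy => hy.1

lemma mem_double {L : Type*} [Lattice L] (a b : L) {x : L} (hx : x ∈ Set.Icc a b) :
    x ∈ relCompl a b (relCompl a b {x}) := by
  refine ⟨hx, fun y hy => ?_⟩
  obtain ⟨hy1, hy2⟩ := hy
  obtain ⟨h1, h2⟩ := hy2 x rfl
  exact ⟨by rw [sup_comm]; exact h1, by rw [inf_comm]; exact h2⟩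

lemma double_subset {L : Type*} [Lattice L] (a b : L) {x y : L}
    (hy : y ∈ relCompl a b (relCompl a b {x})) :
    relCompl a b (relCompl a b {y}) ⊆ relCompl a b (relCompl a b {x}) := by
  apply relCompl_antitone
  rintro z ⟨hz1, hz2⟩
  refine ⟨hz1, fun w hw => ?_⟩
  rw [Set.mem_singleton_iff] at hw
  subst hw
  obtain ⟨h1, h2⟩ := hy.2 z ⟨hz1, hz2⟩
  exact ⟨by rw [sup_comm]; exact h1, by rw [inf_comm]; exact h2⟩

theorem exists_fixed_point_in_double_relCompl
    {L : Type*} [Lattice L] (a b : L) (hab : a ≤ b)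
    (hfin : (Set.Icc a b).Finite)
    (hinj : ∀ c ∈ Set.Icc a b, ∀ d ∈ Set.Icc a b,
      relCompl a b (relCompl a b {c}) = relCompl a b (relCompl a b {d}) → c = d)
    (c : L) (hc : c ∈ Set.Icc a b) :
    ∃ d ∈ relCompl a b (relCompl a b {c}),
      relCompl a b (relCompl a b {d}) = {d} := by
  set S := relCompl a b (relCompl a b {c}) with hS
  have hSfin : S.Finite := hfin.subset (relCompl_subset_Icc a b _)
  have hSne : S.Nonempty := ⟨c, mem_double a b hc⟩
  -- pick d ∈ S minimizing the ncard of its double relCompl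
  obtain ⟨d, hdS, hdmin⟩ := Set.Finite.exists_minimalFor
    (fun y => (relCompl a b (relCompl a b {y})).ncard) S hSfin hSne
  refine ⟨d, hdS, ?_⟩
  have hdIcc : d ∈ Set.Icc a b := hdS.1
  have hdd : relCompl a b (relCompl a b {d}) ⊆ S := double_subset a b hdS
  ext e
  simp only [Set.mem_singleton_iff]
  constructor
  · intro he
    have heS : e ∈ S := hdd he
    have heIcc : e ∈ Set.Icc a b := he.1
    have hsub : relCompl a b (relCompl a b {e}) ⊆ relCompl a b (relCompl a b {d}) :=
      double_subset a b he
    have hle : (relCompl a b (relCompl a b {e})).ncard ≤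
        (relCompl a b (relCompl a b {d})).ncard :=
      Set.ncard_le_ncard hsub (hfin.subset (relCompl_subset_Icc a b _))
    have heq : (relCompl a b (relCompl a b {d})).ncard =
        (relCompl a b (relCompl a b {e})).ncard := le_antisymm (hdmin heS hle) hle
    have : relCompl a b (relCompl a b {e}) = relCompl a b (relCompl a b {d}) :=
      Set.eq_of_subset_of_ncard_le hsub heq.le (hfin.subset (relCompl_subset_Icc a b _))
    exact hinj e heIcc d hdIcc this
  · rintro rfl
    exact mem_double a b hdIcc
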